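/- (Ruzsa covering for group actions, maximality step) Let G act on X, A ⊆ G finite nonempty, Y ⊆ X finite. Then there exists Z ⊆ Y such that Y ⊆ A⁻¹A(Z), the images A(z) for z ∈ Z are pairwise disjoint (so |A(Z)| = ∑_{z∈Z}|A(z)|), and if moreover |A(Y)| ≤ K|Y| then |Z| ≤ (K|Y|/|A|) · max_{z∈Z} |A⁻¹A ∩ Stab(z)|. -/

import Mathlib

open scoped Classical

theorem stmt19 {G X : Type*} [Group G] [MulAction G X]
    (A : Finset G) (hA : A.Nonempty) (Y : Finset X) (hY : Y.Nonempty) (K : ℝ) (hK : 1 ≤ K) :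
    ∃ Z ⊆ Y,
      (Y ⊆ ((((A ×ˢ A).image (fun p => p.1⁻¹ * p.2)) ×ˢ Z).image (fun p => p.1 • p.2))) ∧
      (∀ z ∈ Z, ∀ z' ∈ Z, z ≠ z' →
        Disjoint (A.image (fun a => a • z)) (A.image (fun a => a • z'))) ∧
      ((((A ×ˢ Y).image (fun p => p.1 • p.2)).card : ℝ) ≤ K * Y.card →
        ∀ M : ℕ,
          (∀ z ∈ Z, (((A ×ˢ A).image (fun p => p.1⁻¹ * p.2)).filter
            (fun g => g • z = z)).card ≤ M) →
          (Z.card : ℝ) ≤ K * Y.card / A.card * M) := by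
  classical
  set f : X → Finset X := fun z => A.image (fun a => a • z) with hf
  set S := Y.powerset.filter
    (fun Z => ∀ z ∈ Z, ∀ z' ∈ Z, z ≠ z' → Disjoint (f z) (f z')) with hS
  have hSne : S.Nonempty := ⟨∅, by simp [hS]⟩
  obtain ⟨Z, hZS, hZmax⟩ := S.exists_max_image (fun Z => Z.card) hSne
  simp only [hS, Finset.mem_filter, Finset.mem_powerset] at hZS
  obtain ⟨hZY, hdisj⟩ := hZS
  refine ⟨Z, hZY, ?_, hdisj, ?_⟩
  · intro y hy
    have key : ∃ z ∈ Z, ∃ a ∈ A, ∃ b ∈ A, a • y = b • z := by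
      by_cases hyZ : y ∈ Z
      · obtain ⟨a, ha⟩ := hA
        exact ⟨y, hyZ, a, ha, a, ha, rfl⟩
      · by_contra hcon
        push_neg at hcon
        have hdisj' : ∀ z ∈ Z, Disjoint (f y) (f z) := by
          intro z hz
          rw [Finset.disjoint_left]
          rintro x hx hx'
          simp only [hf, Finset.mem_image] at hx hx'
          obtain ⟨a, ha, rfl⟩ := hx
          obtain ⟨b, hb, hb'⟩ := hx'
          exact hcon z hz a ha b hb hb'.symm
        have hins : insert y Z ∈ S := by
          simp only [hS, Finset.mem_filter, Finset.mem_powerset]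
          refine ⟨Finset.insert_subset hy hZY, ?_⟩
          intro z hz z' hz' hne
          rcases Finset.mem_insert.1 hz with h1 | h1
          · rcases Finset.mem_insert.1 hz' with h2 | h2
            · exact absurd (h1.trans h2.symm) hne
            · exact h1 ▸ hdisj' z' h2
          · rcases Finset.mem_insert.1 hz' with h2 | h2
            · exact h2 ▸ (hdisj' z h1).symm
            · exact hdisj z h1 z' h2 hne
        have := hZmax _ hins
        rw [Finset.card_insert_of_notMem hyZ] at this
        omega
    obtain ⟨z, hz, a, ha, b, hb, hab⟩ := key
    refine Finset.mem_image.2 ⟨(a⁻¹ * b, z), ?_, ?_⟩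
    · exact Finset.mem_product.2
        ⟨Finset.mem_image.2 ⟨(a, b), Finset.mem_product.2 ⟨ha, hb⟩, rfl⟩, hz⟩
    · simp only [mul_smul]
      rw [← hab, inv_smul_smul]
  · intro hAY M hM
    have key : ∀ z ∈ Z, A.card ≤ M * (f z).card := by
      intro z hz
      refine Finset.card_le_mul_card_image _ M ?_
      intro x hx
      simp only [Finset.mem_image] at hx
      obtain ⟨a₀, ha₀, rfl⟩ := hx
      calc (A.filter fun a => a • z = a₀ • z).card
          ≤ (((A ×ˢ A).image (fun p => p.1⁻¹ * p.2)).filter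
              (fun g => g • z = z)).card := by
            apply Finset.card_le_card_of_injOn (fun a => a₀⁻¹ * a)
            · intro a ha
              simp only [Finset.mem_coe, Finset.mem_filter] at ha ⊢
              refine ⟨Finset.mem_image.2
                ⟨(a₀, a), Finset.mem_product.2 ⟨ha₀, ha.1⟩, rfl⟩, ?_⟩
              rw [mul_smul, ha.2, inv_smul_smul]
            · intro a _ b _ h
              exact mul_left_cancel h
        _ ≤ M := hM z hz
    have hsum : Z.card * A.card ≤ M * (Z.biUnion f).card := by
      rw [Finset.card_biUnion hdisj, Finset.mul_sum]
      calc Z.card * A.card = ∑ _z ∈ Z, A.card := by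
            rw [Finset.sum_const, smul_eq_mul]
        _ ≤ ∑ z ∈ Z, M * (f z).card := Finset.sum_le_sum key
    have hsub : Z.biUnion f ⊆ (A ×ˢ Y).image (fun p => p.1 • p.2) := by
      intro x hx
      simp only [Finset.mem_biUnion, hf, Finset.mem_image] at hx
      obtain ⟨z, hz, a, ha, rfl⟩ := hx
      exact Finset.mem_image.2 ⟨(a, z), Finset.mem_product.2 ⟨ha, hZY hz⟩, rfl⟩
    have h1 : Z.card * A.card ≤ M * ((A ×ˢ Y).image (fun p => p.1 • p.2)).card :=
      hsum.trans (Nat.mul_le_mul_left M (Finset.card_le_card hsub))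
    have hApos : (0:ℝ) < A.card := by exact_mod_cast hA.card_pos
    rw [div_mul_eq_mul_div, le_div_iff₀ hApos]
    calc (Z.card : ℝ) * A.card
        ≤ M * ((A ×ˢ Y).image (fun p => p.1 • p.2)).card := by exact_mod_cast h1
      _ ≤ M * (K * Y.card) := mul_le_mul_of_nonneg_left hAY (Nat.cast_nonneg M)
      _ = K * Y.card * M := by ring
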